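/- Let E₁ and E₂ be symmetric positive definite k×k real matrices and r ∈ ℝ. The block matrix R = [[E₁, r√(E₁E₂)],[r(√(E₁E₂))ᵀ, E₂]] is positive semidefinite if and only if |r| ≤ 1. -/

import Mathlib

open Matrix

/-- The positive semidefinite square root of a positive semidefinite matrix
(the definition removed from Mathlib, restored with its old meaning). -/
noncomputable def Matrix.PosSemidef.sqrt {n 𝕜 : Type*} [Fintype n] [DecidableEq n] [RCLike 𝕜]
    [PartialOrder 𝕜] {A : Matrix n n 𝕜} (hA : A.PosSemidef) : Matrix n n 𝕜 :=
  hA.1.eigenvectorUnitary.1 * diagonal ((↑) ∘ (√·) ∘ hA.1.eigenvalues) *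
  (star hA.1.eigenvectorUnitary : Matrix n n 𝕜)

lemma Matrix.PosSemidef.posSemidef_sqrt {n : Type*} [Fintype n] [DecidableEq n]
    {A : Matrix n n ℝ} (hA : A.PosSemidef) : hA.sqrt.PosSemidef := by
  have hd : (diagonal (((↑) ∘ (√·) ∘ hA.1.eigenvalues) : n → ℝ)).PosSemidef :=
    PosSemidef.diagonal (fun i => by simp [Real.sqrt_nonneg])
  have := hd.mul_mul_conjTranspose_same (hA.1.eigenvectorUnitary : Matrix n n ℝ)
  unfold Matrix.PosSemidef.sqrt
  convert this using 2 <;> rfl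

lemma Matrix.PosSemidef.sqrt_mul_self {n : Type*} [Fintype n] [DecidableEq n]
    {A : Matrix n n ℝ} (hA : A.PosSemidef) : hA.sqrt * hA.sqrt = A := by
  have hU : (star hA.1.eigenvectorUnitary : Matrix n n ℝ) * hA.1.eigenvectorUnitary = 1 :=
    Unitary.coe_star_mul_self _
  unfold Matrix.PosSemidef.sqrt
  conv_rhs => rw [hA.1.spectral_theorem]
  rw [Unitary.conjStarAlgAut_apply]
  simp only [Matrix.mul_assoc]
  rw [← Matrix.mul_assoc (star _ : Matrix n n ℝ) _ , hU, Matrix.one_mul, ← Matrix.mul_assoc (diagonal _),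
    diagonal_mul_diagonal]
  congr 3
  funext i
  simp only [Function.comp_apply, RCLike.ofReal_real_eq_id, id]
  exact Real.mul_self_sqrt (hA.eigenvalues_nonneg i)

/-- The principal square root of `E₁ * E₂` for positive definite `E₁, E₂`:
`E₁^{1/2} · (E₁^{1/2} E₂ E₁^{1/2})^{1/2} · E₁^{-1/2}`. -/
noncomputable def principalSqrtMul {k : ℕ} {E₁ E₂ : Matrix (Fin k) (Fin k) ℝ}
    (h₁ : E₁.PosDef) (h₂ : E₂.PosDef) : Matrix (Fin k) (Fin k) ℝ :=
  h₁.posSemidef.sqrt *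
    (h₂.posSemidef.mul_mul_conjTranspose_same h₁.posSemidef.sqrt).sqrt *
    h₁.posSemidef.sqrt⁻¹

lemma smul_posSemidef_iff {k : ℕ} (hk : 0 < k) {E : Matrix (Fin k) (Fin k) ℝ}
    (hE : E.PosDef) (c : ℝ) : (c • E).PosSemidef ↔ 0 ≤ c := by
  constructor
  · intro h
    set x : Fin k → ℝ := Pi.single ⟨0, hk⟩ 1 with hx
    have hx0 : x ≠ 0 := by
      intro h0
      have := congrFun h0 ⟨0, hk⟩
      simp [hx, Pi.single_eq_same] at this
    have hq : 0 < x ⬝ᵥ E *ᵥ x := by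
      have := hE.dotProduct_mulVec_pos hx0
      simpa using this
    have h2 := h.dotProduct_mulVec_nonneg x
    rw [smul_mulVec, dotProduct_smul, smul_eq_mul] at h2
    simp only [star_trivial] at h2
    nlinarith [hq, h2]
  · intro hc
    refine .of_dotProduct_mulVec_nonneg ?_ (fun x => ?_)
    · rw [IsHermitian, conjTranspose_smul, star_trivial, hE.1.eq]
    · rw [smul_mulVec, dotProduct_smul, smul_eq_mul]
      exact mul_nonneg hc (hE.posSemidef.dotProduct_mulVec_nonneg x)

/-- `R = [[E₁, r√(E₁E₂)], [r(√(E₁E₂))ᵀ, E₂]]` is positive semidefinite iff `|r| ≤ 1`. -/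
theorem pairwise_block_posSemidef_iff (k : ℕ) (hk : 0 < k)
    (E₁ E₂ : Matrix (Fin k) (Fin k) ℝ)
    (h₁ : E₁.PosDef) (h₂ : E₂.PosDef) (r : ℝ) :
    (Matrix.fromBlocks E₁ (r • principalSqrtMul h₁ h₂)
        (r • (principalSqrtMul h₁ h₂)ᵀ) E₂).PosSemidef ↔ |r| ≤ 1 := by
  classical
  set S := h₁.posSemidef.sqrt with hSdef
  have hSherm : Sᴴ = S := h₁.posSemidef.posSemidef_sqrt.1
  have hSS : S * S = E₁ := h₁.posSemidef.sqrt_mul_self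
  have hSunit : IsUnit S := by
    rw [Matrix.isUnit_iff_isUnit_det]
    have hdd : S.det * S.det = E₁.det := by rw [← det_mul, hSS]
    have hd : E₁.det ≠ 0 := h₁.det_pos.ne'
    refine isUnit_iff_ne_zero.2 fun h => hd ?_
    rw [← hdd, h, mul_zero]
  haveI : Invertible S := hSunit.invertible
  set M := (h₂.posSemidef.mul_mul_conjTranspose_same S).sqrt with hMdef
  have hMherm : Mᴴ = M :=
    (h₂.posSemidef.mul_mul_conjTranspose_same S).posSemidef_sqrt.1
  have hMM : M * M = S * E₂ * S := by
    rw [show S * E₂ * S = S * E₂ * Sᴴ by rw [hSherm]]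
    exact (h₂.posSemidef.mul_mul_conjTranspose_same S).sqrt_mul_self
  set P := principalSqrtMul h₁ h₂ with hPdef
  have hP : P = S * M * S⁻¹ := rfl
  have hPH : Pᴴ = S⁻¹ * M * S := by
    rw [hP, conjTranspose_mul, conjTranspose_mul, conjTranspose_nonsing_inv, hSherm, hMherm,
      Matrix.mul_assoc]
  have hE₁inv : E₁⁻¹ = S⁻¹ * S⁻¹ := by rw [← hSS, Matrix.mul_inv_rev]
  have key : Pᴴ * E₁⁻¹ * P = E₂ := by
    rw [hPH, hE₁inv, hP]
    simp only [Matrix.mul_assoc, Matrix.inv_mul_cancel_left_of_invertible,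
      Matrix.mul_inv_cancel_left_of_invertible]
    rw [← Matrix.mul_assoc M M, hMM]
    simp only [Matrix.mul_assoc, Matrix.inv_mul_cancel_left_of_invertible,
      Matrix.mul_inv_cancel_left_of_invertible, Matrix.mul_inv_of_invertible, Matrix.mul_one]
  have hPT : r • Pᵀ = (r • P)ᴴ := by
    rw [conjTranspose_smul, star_trivial]
    congr 1
  haveI : Invertible E₁ := h₁.isUnit.invertible
  rw [hPT, PosDef.fromBlocks₁₁ _ _ h₁]
  have hSchur : E₂ - (r • P)ᴴ * E₁⁻¹ * (r • P) = (1 - r ^ 2) • E₂ := by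
    rw [conjTranspose_smul, star_trivial, Matrix.smul_mul, Matrix.smul_mul, Matrix.mul_smul,
      key, smul_smul, sub_smul, one_smul, sq]
  rw [hSchur, smul_posSemidef_iff hk h₂, sub_nonneg, sq_le_one_iff_abs_le_one]
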